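/- Let F ∈ D_a be entire with μ_n := −ln|a_n| strictly increasing and ∑_n 1/(μ_{n+1} − μ_n) < +∞, let δ > 0, and let Δ_n be as defined. Then for every q ∈ ℝ the series f_q(σ) = ∑_{n=0}^∞ e^{λ_n − q Δ_n} e^{σ μ_n} converges (absolutely) for every σ < 0 and diverges for every σ > 0. -/

import Mathlib

open Filter

/-- `Del δ μ n` is `Δ_n := δ ∑_{j=0}^{n-1} (μ_{j+1} - μ_j)
    ∑_{m=j+1}^∞ ( 1/(μ_m − μ_{m−1}) + 1/(μ_{m+1} − μ_m) )`; in particular `Δ_0 = 0`. -/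
noncomputable def Del (δ : ℝ) (μ : ℕ → ℝ) (n : ℕ) : ℝ :=
  δ * ∑ j ∈ Finset.range n, (μ (j + 1) - μ j) *
    ∑' i : ℕ, (1 / (μ (j + 1 + i) - μ (j + i)) + 1 / (μ (j + 2 + i) - μ (j + 1 + i)))

set_option maxHeartbeats 2000000 in
/-- If `F ∈ D_a` is entire, `μ_n := −ln|a_n|` is strictly increasing with
`∑ 1/(μ_{n+1}−μ_n) < ∞`, and `δ > 0`, then for every `q ∈ ℝ` the Dirichlet series
`f_q(σ) = ∑ (e^{λ_n}/α_n^q) e^{σ μ_n}` (`α_n = e^{Δ_n}`) converges absolutely for every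
`σ < 0` and diverges for every `σ > 0`. -/
theorem stmt_11 (a : ℕ → ℂ) (lam : ℕ → ℝ)
    (hdist : ∀ n m, n ≠ m → lam n ≠ lam m)
    (hlam0 : ∀ n, 0 ≤ lam n)
    (hlamsup : ∀ n, ∃ m, lam n < lam m)
    (hentire : ∀ x : ℝ, Summable fun n => ‖a n‖ * Real.exp (x * lam n))
    (hne : ∀ n, a n ≠ 0) (n0 : ℕ)
    (hdec : ∀ n ≥ n0, ‖a (n + 1)‖ < ‖a n‖)
    (hto0 : Tendsto (fun n => ‖a n‖) atTop (nhds 0))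
    (μ : ℕ → ℝ) (hμ : ∀ n, μ n = -Real.log (‖a n‖))
    (hμmono : StrictMono μ)
    (hsum : Summable fun n => 1 / (μ (n + 1) - μ n))
    (δ : ℝ) (hδ : 0 < δ) :
    ∀ q : ℝ,
      (∀ σ : ℝ, σ < 0 →
        Summable fun n => Real.exp (lam n - q * Del δ μ n) * Real.exp (σ * μ n)) ∧
      (∀ σ : ℝ, 0 < σ →
        ¬ Summable fun n => Real.exp (lam n - q * Del δ μ n) * Real.exp (σ * μ n)) := by
  intro q
  set d : ℕ → ℝ := fun n => μ (n + 1) - μ n with hd_def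
  have hd : ∀ n, 0 < d n := fun n => sub_pos.mpr (hμmono (Nat.lt_succ_self n))
  have hsd : Summable fun n => 1 / d n := hsum
  set T : ℕ → ℝ := fun j => ∑' m : ℕ, 1 / d (m + j) with hT_def
  have hS : ∀ j, Summable fun i : ℕ => 1 / d (i + j) :=
    fun j => (summable_nat_add_iff j).mpr hsd
  have hTnonneg : ∀ j, 0 ≤ T j := fun j =>
    tsum_nonneg fun m => one_div_nonneg.mpr (hd _).le
  -- identify the inner tsum of `Del`
  have inner_eq : ∀ j : ℕ,
      (∑' i : ℕ, (1 / (μ (j + 1 + i) - μ (j + i)) + 1 / (μ (j + 2 + i) - μ (j + 1 + i))))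
        = T j + T (j + 1) := by
    intro j
    calc (∑' i : ℕ, (1 / (μ (j + 1 + i) - μ (j + i)) + 1 / (μ (j + 2 + i) - μ (j + 1 + i))))
        = ∑' i : ℕ, (1 / d (i + j) + 1 / d (i + j + 1)) := by
          apply tsum_congr; intro i
          simp only [hd_def]
          rw [show j + 1 + i = i + j + 1 from by omega, show j + i = i + j from by omega,
            show j + 2 + i = i + j + 1 + 1 from by omega]
      _ = (∑' i : ℕ, 1 / d (i + j)) + ∑' i : ℕ, 1 / d (i + j + 1) :=
          Summable.tsum_add (hS j) (hS (j + 1))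
      _ = T j + T (j + 1) := rfl
  have hDel : ∀ n, Del δ μ n = δ * ∑ j ∈ Finset.range n, d j * (T j + T (j + 1)) := by
    intro n
    unfold Del
    congr 1
    apply Finset.sum_congr rfl
    intro j _
    rw [inner_eq j]
  have hDelnonneg : ∀ n, 0 ≤ Del δ μ n := by
    intro n
    rw [hDel n]
    apply mul_nonneg hδ.le
    apply Finset.sum_nonneg
    intro j _
    exact mul_nonneg (hd j).le (add_nonneg (hTnonneg j) (hTnonneg (j + 1)))
  -- μ n = -log |a n|, so |a n| = exp (-μ n)
  have hexp : ∀ n, ‖a n‖ = Real.exp (-μ n) := by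
    intro n
    rw [hμ n, neg_neg, Real.exp_log (norm_pos_iff.mpr (hne n))]
  -- μ → ∞
  have hμtop : Tendsto μ atTop atTop := by
    have h1 : Tendsto (fun n => Real.exp (-μ n)) atTop (nhds 0) := by
      have := hto0
      simp only [hexp] at this
      exact this
    exact tendsto_neg_atBot_iff.mp (Real.tendsto_exp_comp_nhds_zero.mp h1)
  -- T j → 0
  have hT0 : Tendsto T atTop (nhds 0) := tendsto_sum_nat_add fun n => 1 / d n
  have hR0 : Tendsto (fun j => T j + T (j + 1)) atTop (nhds 0) := by
    have h2 : Tendsto (fun j => T (j + 1)) atTop (nhds 0) :=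
      hT0.comp (tendsto_add_atTop_nat 1)
    simpa using hT0.add h2
  -- the key linear bound on Del
  have hDelbound : ∀ ε : ℝ, 0 < ε → ∃ C, ∀ n, Del δ μ n ≤ ε * μ n + C := by
    intro ε hε
    obtain ⟨J, hJ⟩ := eventually_atTop.mp (hR0.eventually (gt_mem_nhds
      (show (0:ℝ) < ε / δ by positivity)))
    refine ⟨δ * (∑ j ∈ Finset.range J, d j * (T j + T (j + 1))) - ε * μ 0, fun n => ?_⟩
    rw [hDel n]
    have h1 : ∑ j ∈ Finset.range n, d j * (T j + T (j + 1)) ≤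
        ∑ j ∈ Finset.range n, ((if j < J then d j * (T j + T (j + 1)) else 0) + (ε / δ) * d j) := by
      apply Finset.sum_le_sum
      intro j _
      by_cases hjJ : j < J
      · simp only [if_pos hjJ]
        have : 0 ≤ (ε / δ) * d j := mul_nonneg (by positivity) (hd j).le
        linarith
      · simp only [if_neg hjJ, zero_add]
        calc d j * (T j + T (j + 1)) ≤ d j * (ε / δ) :=
              mul_le_mul_of_nonneg_left (hJ j (not_lt.mp hjJ)).le (hd j).le
          _ = (ε / δ) * d j := mul_comm _ _
    have h2 : ∑ j ∈ Finset.range n, (if j < J then d j * (T j + T (j + 1)) else 0) ≤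
        ∑ j ∈ Finset.range J, d j * (T j + T (j + 1)) := by
      rw [← Finset.sum_filter]
      apply Finset.sum_le_sum_of_subset_of_nonneg
      · intro x hx
        simp only [Finset.mem_filter, Finset.mem_range] at hx ⊢
        exact hx.2
      · intro j _ _
        exact mul_nonneg (hd j).le (add_nonneg (hTnonneg j) (hTnonneg (j + 1)))
    have h3 : ∑ j ∈ Finset.range n, (ε / δ) * d j = (ε / δ) * (μ n - μ 0) := by
      rw [← Finset.mul_sum]
      congr 1
      simp only [hd_def]
      exact Finset.sum_range_sub μ n
    rw [Finset.sum_add_distrib, h3] at h1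
    have hstep : ∑ j ∈ Finset.range n, d j * (T j + T (j + 1)) ≤
        (∑ j ∈ Finset.range J, d j * (T j + T (j + 1))) + (ε / δ) * (μ n - μ 0) := by
      linarith
    have hmul := mul_le_mul_of_nonneg_left hstep hδ.le
    have hδne : δ ≠ 0 := hδ.ne'
    have hq : δ * ((ε / δ) * (μ n - μ 0)) = ε * (μ n - μ 0) := by
      field_simp
    calc δ * ∑ j ∈ Finset.range n, d j * (T j + T (j + 1))
        ≤ δ * ((∑ j ∈ Finset.range J, d j * (T j + T (j + 1))) + (ε / δ) * (μ n - μ 0)) := hmul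
      _ = δ * (∑ j ∈ Finset.range J, d j * (T j + T (j + 1))) + ε * (μ n - μ 0) := by
          rw [mul_add, hq]
      _ = ε * μ n + (δ * (∑ j ∈ Finset.range J, d j * (T j + T (j + 1))) - ε * μ 0) := by ring
  -- lam n ≤ c μ n eventually
  have hlamμ : ∀ c : ℝ, 0 < c → ∃ N, ∀ n ≥ N, lam n ≤ c * μ n := by
    intro c hc
    have h := (hentire (1 / c)).tendsto_atTop_zero
    obtain ⟨N, hN⟩ := eventually_atTop.mp (h.eventually (gt_mem_nhds one_pos))
    refine ⟨N, fun n hn => ?_⟩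
    have h1 := hN n hn
    rw [hexp n, ← Real.exp_add] at h1
    have h2 : -μ n + 1 / c * lam n < 0 := by
      by_contra h'
      push_neg at h'
      exact absurd h1 (not_lt.mpr (Real.one_le_exp h'))
    have h3 : lam n / c < μ n := by
      rw [div_eq_mul_one_div, mul_comm]
      linarith
    have h4 : lam n < μ n * c := (div_lt_iff₀ hc).mp h3
    linarith [mul_comm (μ n) c]
  -- summability of exp (-(c μ n)) for c > 0
  have hgeo : ∀ c : ℝ, 0 < c → Summable fun n => Real.exp (-(c * μ n)) := by
    intro c hc
    have hd1 : ∀ᶠ n in atTop, (1:ℝ) ≤ d n := by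
      have h0 : Tendsto (fun n => 1 / d n) atTop (nhds 0) := hsd.tendsto_atTop_zero
      filter_upwards [h0.eventually (gt_mem_nhds one_pos)] with n hn
      rw [div_lt_one (hd n)] at hn
      linarith
    apply summable_of_ratio_norm_eventually_le
      (show Real.exp (-c) < 1 from Real.exp_lt_one_iff.mpr (by linarith))
    filter_upwards [hd1] with n hn
    simp only [hd_def] at hn
    rw [Real.norm_eq_abs, Real.norm_eq_abs, abs_of_pos (Real.exp_pos _),
      abs_of_pos (Real.exp_pos _), ← Real.exp_add]
    apply Real.exp_le_exp.mpr
    nlinarith [mul_le_mul_of_nonneg_left hn hc.le]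
  have habsq : -q ≤ |q| := (le_abs_self (-q)).trans_eq (abs_neg q)
  constructor
  · -- convergence for σ < 0
    intro σ hσ
    set c : ℝ := -σ with hc_def
    have hc : 0 < c := by simp [hc_def]; linarith
    set ε : ℝ := c / (2 * (|q| + 1)) with hε_def
    have hεpos : 0 < ε := by positivity
    obtain ⟨C, hC⟩ := hDelbound ε hεpos
    have hεq : |q| * ε ≤ c / 2 := by
      rw [hε_def, ← mul_div_assoc, div_le_div_iff₀ (by positivity) (by positivity)]
      nlinarith [abs_nonneg q]
    obtain ⟨N1, hN1⟩ := hlamμ (c / 4) (by positivity)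
    obtain ⟨N2, hN2⟩ := eventually_atTop.mp (hμtop.eventually_ge_atTop 0)
    set N : ℕ := max N1 N2 with hN_def
    rw [← summable_nat_add_iff N]
    have hmaj : Summable fun n => Real.exp (|q| * C) * Real.exp (-(c / 4 * μ (n + N))) :=
      ((summable_nat_add_iff N).mpr (hgeo (c / 4) (by positivity))).mul_left _
    apply Summable.of_nonneg_of_le (fun n => by positivity) _ hmaj
    intro n
    set m : ℕ := n + N with hm_def
    have hmN1 : N1 ≤ m := le_trans (le_max_left _ _) (Nat.le_add_left N n)
    have hmN2 : N2 ≤ m := le_trans (le_max_right _ _) (Nat.le_add_left N n)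
    have hlm : lam m ≤ c / 4 * μ m := hN1 m hmN1
    have hμm : 0 ≤ μ m := hN2 m hmN2
    rw [← Real.exp_add, ← Real.exp_add]
    apply Real.exp_le_exp.mpr
    have A : -q * Del δ μ m ≤ |q| * Del δ μ m :=
      mul_le_mul_of_nonneg_right habsq (hDelnonneg m)
    have B : |q| * Del δ μ m ≤ |q| * (ε * μ m + C) :=
      mul_le_mul_of_nonneg_left (hC m) (abs_nonneg q)
    have B' : |q| * (ε * μ m + C) = |q| * ε * μ m + |q| * C := by ring
    have D : |q| * ε * μ m ≤ c / 2 * μ m := mul_le_mul_of_nonneg_right hεq hμm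
    have hσμ : σ * μ m = -(c * μ m) := by rw [hc_def]; ring
    linarith [A, B, B', D, hσμ, hlm]
  · -- divergence for σ > 0
    intro σ hσ hSum
    have ht := hSum.tendsto_atTop_zero
    set ε : ℝ := σ / (2 * (|q| + 1)) with hε_def
    have hεpos : 0 < ε := by positivity
    obtain ⟨C, hC⟩ := hDelbound ε hεpos
    have hεq : |q| * ε ≤ σ / 2 := by
      rw [hε_def, ← mul_div_assoc, div_le_div_iff₀ (by positivity) (by positivity)]
      nlinarith [abs_nonneg q]
    have hbig : ∀ᶠ n in atTop,
        (1:ℝ) ≤ Real.exp (lam n - q * Del δ μ n) * Real.exp (σ * μ n) := by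
      filter_upwards [hμtop.eventually_ge_atTop 0,
        hμtop.eventually_ge_atTop ((2 / σ) * (|q| * C + 1))] with n h0 h1
      rw [← Real.exp_add]
      apply Real.one_le_exp
      have A : -|q| * Del δ μ n ≤ -q * Del δ μ n :=
        mul_le_mul_of_nonneg_right (neg_le_neg (le_abs_self q)) (hDelnonneg n)
      have B : |q| * Del δ μ n ≤ |q| * (ε * μ n + C) :=
        mul_le_mul_of_nonneg_left (hC n) (abs_nonneg q)
      have D : |q| * ε * μ n ≤ σ / 2 * μ n := mul_le_mul_of_nonneg_right hεq h0
      have E : σ / 2 * ((2 / σ) * (|q| * C + 1)) = |q| * C + 1 := by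
        field_simp
      have F : σ / 2 * ((2 / σ) * (|q| * C + 1)) ≤ σ / 2 * μ n :=
        mul_le_mul_of_nonneg_left h1 (by positivity)
      have B'' : |q| * (ε * μ n + C) = |q| * ε * μ n + |q| * C := by ring
      have hl0 := hlam0 n
      linarith [A, B, B'', D, E, F, hl0]
    have hsmall := ht.eventually (gt_mem_nhds one_pos)
    obtain ⟨n, h1, h2⟩ := (hbig.and hsmall).exists
    linarith
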